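/- Let ℓ₁,...,ℓ_s ∈ K[x₁,x₂] with ℓ₁ = x₁ and ℓᵢ = x₁ + λᵢx₂ for i = 2,...,s, where the λᵢ ∈ K are nonzero and pairwise distinct (s ≥ 3). Then the vectors c_{1,u,v} for 2 ≤ u < v ≤ s form a linearly independent set in K^{C(s,2)}, and the span of all coefficient vectors of 3-dependencies among ℓ₁,...,ℓ_s has dimension C(s−1, 2). -/

import Mathlib

open MvPolynomial Finset

/-- The coefficient vector of a 3-dependency `c_a ℓ_a + c_b ℓ_b + c_c ℓ_c = 0` (with `a < b < c`)
in `K^(s×s)`: entry `c_c` at position `(a,b)`, `c_b` at `(a,c)`, `c_a` at `(b,c)`, 0 elsewhere. -/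
def cvec {K : Type*} [Field K] {s : ℕ} (a b c : Fin s) (ca cb cc : K) :
    Fin s × Fin s → K := fun p =>
  if p = (a, b) then cc else if p = (a, c) then cb else if p = (b, c) then ca else 0

/-- For `ℓ₁ = x₁`, `ℓᵢ = x₁ + λᵢ x₂` (`λᵢ` nonzero, pairwise distinct, `s ≥ 3`), the vectors
`c_{1,u,v}` for `2 ≤ u < v ≤ s` are linearly independent, and the span of all coefficient
vectors of 3-dependencies among `ℓ₁,...,ℓ_s` has dimension `C(s-1,2)`. -/
private lemma cvec_smul {K : Type*} [Field K] {s : ℕ} (a b c : Fin s) (ca cb cc t : K) :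
    t • cvec a b c ca cb cc = cvec a b c (t * ca) (t * cb) (t * cc) := by
  funext p
  simp only [cvec, Pi.smul_apply, smul_eq_mul]
  split_ifs <;> ring

private lemma cvec_comb {K : Type*} [Field K] {s : ℕ} [NeZero s] {a b c : Fin s}
    (ha : a ≠ 0) (hb : b ≠ 0) (hc : c ≠ 0) (hab : a ≠ b) (hac : a ≠ c) (hbc : b ≠ c)
    (xa xb xc t : K) :
    cvec a b c (t * (xb - xc)) (t * (xc - xa)) (t * (xa - xb))
      = t • cvec 0 a b (xa - xb) xb (-xa) + (-t) • cvec 0 a c (xa - xc) xc (-xa)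
        + t • cvec 0 b c (xb - xc) xc (-xb) := by
  funext p
  simp only [cvec, Pi.add_apply, Pi.smul_apply, smul_eq_mul]
  split_ifs <;> first | ring1 | ((exfalso; simp_all [Prod.ext_iff]) <;> tauto)

theorem stmt3 {K : Type*} [Field K] [CharZero K] {s : ℕ} [NeZero s] (hs : 3 ≤ s)
    (lam : Fin s → K) (hlam : ∀ i : Fin s, i ≠ 0 → lam i ≠ 0)
    (hdist : ∀ i j : Fin s, i ≠ 0 → j ≠ 0 → i ≠ j → lam i ≠ lam j)
    (ℓ : Fin s → MvPolynomial (Fin 2) K)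
    (hℓ0 : ℓ 0 = X 0)
    (hℓ : ∀ i : Fin s, i ≠ 0 → ℓ i = X 0 + lam i • X 1) :
    LinearIndependent K
      (fun p : {p : Fin s × Fin s // 0 < p.1 ∧ p.1 < p.2} =>
        cvec 0 p.val.1 p.val.2 (lam p.val.1 - lam p.val.2) (lam p.val.2) (-(lam p.val.1)))
    ∧ Module.finrank K (Submodule.span K
        {x : Fin s × Fin s → K | ∃ a b c : Fin s, a < b ∧ b < c ∧
          ∃ ca cb cc : K, ca ≠ 0 ∧ cb ≠ 0 ∧ cc ≠ 0 ∧
            ca • ℓ a + cb • ℓ b + cc • ℓ c = 0 ∧ x = cvec a b c ca cb cc})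
      = (s - 1).choose 2 := by
  classical
  -- uniform description of the linear forms
  set mu : Fin s → K := fun i => if i = 0 then 0 else lam i with hmu
  have hmu0 : mu 0 = 0 := if_pos rfl
  have hmune : ∀ i : Fin s, i ≠ 0 → mu i = lam i := fun i hi => if_neg hi
  have hℓ' : ∀ i, ℓ i = X 0 + mu i • X 1 := by
    intro i
    by_cases hi : i = 0
    · subst hi; rw [hℓ0, hmu0, zero_smul, add_zero]
    · rw [hℓ i hi, hmune i hi]
  -- extracting scalar relations from a dependency
  have hdep : ∀ (a b c : Fin s) (ca cb cc : K), ca • ℓ a + cb • ℓ b + cc • ℓ c = 0 →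
      ca + cb + cc = 0 ∧ ca * mu a + cb * mu b + cc * mu c = 0 := by
    intro a b c ca cb cc heq
    constructor
    · have := congrArg (aeval (R := K) ![(1:K), 0]) heq
      simpa [hℓ'] using this
    · have := congrArg (aeval (R := K) ![(0:K), 1]) heq
      simpa [hℓ'] using this
  have hne' : ∀ u v : Fin s, u ≠ 0 → v ≠ 0 → u ≠ v → lam u - lam v ≠ 0 :=
    fun u v hu hv huv => sub_ne_zero_of_ne (hdist u v hu hv huv)
  -- linear independence
  have hindep : LinearIndependent K
      (fun p : {p : Fin s × Fin s // 0 < p.1 ∧ p.1 < p.2} =>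
        cvec 0 p.val.1 p.val.2 (lam p.val.1 - lam p.val.2) (lam p.val.2) (-(lam p.val.1))) := by
    rw [Fintype.linearIndependent_iff]
    intro g hg q
    obtain ⟨⟨u, v⟩, h0u, huv⟩ := q
    have hu0 : u ≠ 0 := (Fin.pos_iff_ne_zero' _).mp h0u
    have hv0 : v ≠ 0 := (Fin.pos_iff_ne_zero' _).mp (h0u.trans huv)
    have hthis := congrFun hg (u, v)
    simp only [Finset.sum_apply, Pi.smul_apply, Pi.zero_apply, smul_eq_mul] at hthis
    rw [Finset.sum_eq_single (⟨(u, v), h0u, huv⟩ :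
        {p : Fin s × Fin s // 0 < p.1 ∧ p.1 < p.2})] at hthis
    · have e : cvec (0:Fin s) u v (lam u - lam v) (lam v) (-(lam u)) (u, v)
          = lam u - lam v := by
        simp only [cvec]
        rw [if_neg (fun h => hu0 (congrArg Prod.fst h)),
          if_neg (fun h => hu0 (congrArg Prod.fst h))]
        simp
      rw [e] at hthis
      exact (mul_eq_zero.mp hthis).resolve_right
        (hne' u v hu0 hv0 (ne_of_lt huv))
    · rintro ⟨⟨b1, b2⟩, hb1, hb12⟩ - hbq
      have e : cvec (0:Fin s) b1 b2 (lam b1 - lam b2) (lam b2) (-(lam b1)) (u, v) = 0 := by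
        simp only [cvec]
        rw [if_neg (fun h => hu0 (congrArg Prod.fst h)),
          if_neg (fun h => hu0 (congrArg Prod.fst h)),
          if_neg (fun h => hbq (Subtype.ext h.symm))]
      rw [e, mul_zero]
    · intro h; exact absurd (Finset.mem_univ _) h
  refine ⟨hindep, ?_⟩
  -- the span of all dependency vectors equals the span of the canonical family
  have hGmem : ∀ u v : Fin s, 0 < u → u < v →
      cvec (0:Fin s) u v (lam u - lam v) (lam v) (-(lam u)) ∈
        Submodule.span K (Set.range
          (fun p : {p : Fin s × Fin s // 0 < p.1 ∧ p.1 < p.2} =>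
            cvec 0 p.val.1 p.val.2 (lam p.val.1 - lam p.val.2) (lam p.val.2)
              (-(lam p.val.1)))) :=
    fun u v hu huv => Submodule.subset_span ⟨⟨(u, v), hu, huv⟩, rfl⟩
  have hspan : Submodule.span K
      {x : Fin s × Fin s → K | ∃ a b c : Fin s, a < b ∧ b < c ∧
          ∃ ca cb cc : K, ca ≠ 0 ∧ cb ≠ 0 ∧ cc ≠ 0 ∧
            ca • ℓ a + cb • ℓ b + cc • ℓ c = 0 ∧ x = cvec a b c ca cb cc}
      = Submodule.span K (Set.range
          (fun p : {p : Fin s × Fin s // 0 < p.1 ∧ p.1 < p.2} =>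
            cvec 0 p.val.1 p.val.2 (lam p.val.1 - lam p.val.2) (lam p.val.2)
              (-(lam p.val.1)))) := by
    apply le_antisymm
    · rw [Submodule.span_le]
      rintro x ⟨a, b, c, hab, hbc, ca, cb, cc, hca, hcb, hcc, heq, rfl⟩
      obtain ⟨h1, h2⟩ := hdep a b c ca cb cc heq
      by_cases ha : a = 0
      · subst ha
        have hb0 : b ≠ 0 := (Fin.pos_iff_ne_zero' _).mp hab
        have hc0 : c ≠ 0 := (Fin.pos_iff_ne_zero' _).mp (hab.trans hbc)
        rw [hmu0, hmune b hb0, hmune c hc0, mul_zero, zero_add] at h2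
        have hlc : lam c ≠ 0 := hlam c hc0
        have e2 : cb = cb / lam c * lam c := (div_mul_cancel₀ cb hlc).symm
        have e1 : cc = cb / lam c * (-(lam b)) := by
          field_simp
          linear_combination h2
        have e3 : ca = cb / lam c * (lam b - lam c) := by
          field_simp
          linear_combination lam c * h1 - h2
        obtain ⟨t, k1, k2, k3⟩ : ∃ t : K, ca = t * (lam b - lam c) ∧ cb = t * lam c
            ∧ cc = t * (-(lam b)) := ⟨cb / lam c, e3, e2, e1⟩
        subst k1; subst k2; subst k3
        rw [← cvec_smul]
        exact Submodule.smul_mem _ _ (hGmem b c hab hbc)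
      · have h0a : (0:Fin s) < a := (Fin.pos_iff_ne_zero' _).mpr ha
        have hb0 : b ≠ 0 := (Fin.pos_iff_ne_zero' _).mp (h0a.trans hab)
        have hc0 : c ≠ 0 := (Fin.pos_iff_ne_zero' _).mp ((h0a.trans hab).trans hbc)
        rw [hmune a ha, hmune b hb0, hmune c hc0] at h2
        have hd : lam b - lam c ≠ 0 := hne' b c hb0 hc0 (ne_of_lt hbc)
        have e3 : ca = ca / (lam b - lam c) * (lam b - lam c) := (div_mul_cancel₀ ca hd).symm
        have e2 : cb = ca / (lam b - lam c) * (lam c - lam a) := by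
          field_simp
          linear_combination h2 - lam c * h1
        have e1 : cc = ca / (lam b - lam c) * (lam a - lam b) := by
          field_simp
          linear_combination lam b * h1 - h2
        have hab' : a ≠ b := ne_of_lt hab
        have hac' : a ≠ c := ne_of_lt (hab.trans hbc)
        have hbc' : b ≠ c := ne_of_lt hbc
        obtain ⟨t, k1, k2, k3⟩ : ∃ t : K, ca = t * (lam b - lam c) ∧ cb = t * (lam c - lam a)
            ∧ cc = t * (lam a - lam b) := ⟨ca / (lam b - lam c), e3, e2, e1⟩
        subst k1; subst k2; subst k3
        rw [cvec_comb ha hb0 hc0 hab' hac' hbc' (lam a) (lam b) (lam c) t]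
        exact Submodule.add_mem _ (Submodule.add_mem _
          (Submodule.smul_mem _ _ (hGmem a b h0a hab))
          (Submodule.smul_mem _ _ (hGmem a c h0a (hab.trans hbc))))
          (Submodule.smul_mem _ _ (hGmem b c (h0a.trans hab) hbc))
    · rw [Submodule.span_le]
      rintro x ⟨⟨⟨u, v⟩, h0u, huv⟩, rfl⟩
      have hu0 : u ≠ 0 := (Fin.pos_iff_ne_zero' _).mp h0u
      have hv0 : v ≠ 0 := (Fin.pos_iff_ne_zero' _).mp (h0u.trans huv)
      refine Submodule.subset_span ⟨0, u, v, h0u, huv, lam u - lam v, lam v, -(lam u),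
        hne' u v hu0 hv0 (ne_of_lt huv), hlam v hv0, neg_ne_zero.mpr (hlam u hu0), ?_, rfl⟩
      rw [hℓ' 0, hℓ' u, hℓ' v, hmu0, hmune u hu0, hmune v hv0]
      module
  rw [hspan, finrank_span_eq_card hindep]
  -- cardinality
  rw [Fintype.card_congr (Equiv.subtypeProdEquivSigmaSubtype fun a b : Fin s => 0 < a ∧ a < b)]
  rw [Fintype.card_sigma]
  have hterm : ∀ a : Fin s, Fintype.card {b : Fin s // 0 < a ∧ a < b} =
      if 0 < (a:ℕ) then s - 1 - a else 0 := by
    intro a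
    by_cases ha : 0 < a
    · rw [if_pos (by rw [Fin.lt_iff_val_lt_val, Fin.val_zero] at ha; exact ha)]
      rw [Fintype.card_congr (Equiv.subtypeEquivRight (q := fun b => a < b) (fun b => by simp [ha]))]
      rw [Fintype.card_subtype]
      have : (univ.filter fun b : Fin s => a < b) = Finset.Ioi a := by ext; simp
      rw [this, Fin.card_Ioi]
    · rw [if_neg (by rw [Fin.lt_iff_val_lt_val, Fin.val_zero] at ha; exact ha)]
      simp only [Fintype.card_eq_zero_iff]
      exact ⟨fun b => ha b.2.1⟩
  simp only [hterm]
  rw [Fin.sum_univ_eq_sum_range (fun i => if 0 < i then s - 1 - i else 0)]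
  obtain ⟨n, hn⟩ : ∃ n, s = n + 1 := ⟨s - 1, by omega⟩
  subst hn
  rw [Finset.sum_range_succ' (fun i => if 0 < i then n + 1 - 1 - i else 0) n]
  have e1 : (∑ i ∈ range n, if 0 < i + 1 then n + 1 - 1 - (i+1) else 0)
      = ∑ i ∈ range n, (n - 1 - i) := by
    refine Finset.sum_congr rfl fun i _ => ?_
    rw [if_pos (Nat.succ_pos i)]
    omega
  rw [e1, if_neg (lt_irrefl 0), add_zero]
  have e2 := Finset.sum_range_reflect (fun j => j) n
  have e3 : n + 1 - 1 = n := rfl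
  rw [e2, e3, Nat.choose_two_right, Finset.sum_range_id]
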